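/- Let K ⊆ ℝ^(n+m) be a compact set that is partially convex in x (i.e., for every y₀ in the projection of K onto ℝ^m, the slice K_{y₀} = {x ∈ ℝ^n | (x, y₀) ∈ K} is convex). If z = (x_z, y_z) ∉ K, then there exist a vector v ∈ ℝ^n and scalars c, M ∈ ℝ such that the function p(x,y) = ⟨v, x⟩ + c + M‖y − y_z‖² satisfies p(w) ≥ 0 for all w ∈ K and p(z) < 0. -/

import Mathlib

/-- Separation of a point from a compact partially convex set by a partially
affine polynomial `p(x,y) = ⟨v,x⟩ + c + M‖y − y_z‖²`. -/
theorem stmt_0 (n m : ℕ) (K : Set ((Fin n → ℝ) × (Fin m → ℝ)))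
    (hK : IsCompact K)
    (hconv : ∀ y₀ : Fin m → ℝ, (∃ x, (x, y₀) ∈ K) →
      Convex ℝ {x : Fin n → ℝ | (x, y₀) ∈ K})
    (z : (Fin n → ℝ) × (Fin m → ℝ)) (hz : z ∉ K) :
    ∃ (v : Fin n → ℝ) (c M : ℝ),
      (∀ w ∈ K, 0 ≤ (∑ i, v i * w.1 i) + c + M * ∑ j, (w.2 j - z.2 j) ^ 2) ∧
      (∑ i, v i * z.1 i) + c + M * ∑ j, (z.2 j - z.2 j) ^ 2 < 0 := by
  classical
  rcases K.eq_empty_or_nonempty with rfl | hKne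
  · exact ⟨0, -1, 0, by simp, by simp⟩
  set s : Set (Fin n → ℝ) := {x | (x, z.2) ∈ K} with hs
  have hKclosed : IsClosed K := hK.isClosed
  have hsclosed : IsClosed s :=
    hKclosed.preimage (continuous_id.prodMk continuous_const)
  have hsconv : Convex ℝ s := by
    by_cases hne : ∃ x, (x, z.2) ∈ K
    · exact hconv z.2 hne
    · have he : s = ∅ := by
        ext x; simp only [hs, Set.mem_setOf_eq, Set.mem_empty_iff_false, iff_false]
        exact fun h => hne ⟨x, h⟩
      rw [he]; exact convex_empty
  have hzs : z.1 ∉ s := by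
    intro h
    exact hz (by simpa [hs] using h)
  obtain ⟨f, u, hfu, huz⟩ := geometric_hahn_banach_closed_point hsconv hsclosed hzs
  -- the slice is compact
  have hscomp : IsCompact s := by
    have himg : s = Prod.fst '' (K ∩ {w | w.2 = z.2}) := by
      ext x; constructor
      · intro h; exact ⟨(x, z.2), ⟨h, rfl⟩, rfl⟩
      · rintro ⟨⟨a, b⟩, ⟨hKab, hb⟩, rfl⟩
        simp only [Set.mem_setOf_eq] at hb
        simpa [hs, hb] using hKab
    rw [himg]
    exact ((hK.inter_right (isClosed_eq continuous_snd continuous_const)).image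
      continuous_fst)
  -- uniform gap on the slice
  obtain ⟨ε, hε, hεs⟩ : ∃ ε > 0, ∀ a ∈ s, ε ≤ u - f a := by
    rcases s.eq_empty_or_nonempty with h | h
    · exact ⟨1, one_pos, by simp [h]⟩
    · obtain ⟨a₀, ha₀, hmin⟩ := hscomp.exists_isMinOn h
        ((continuous_const.sub f.continuous).continuousOn)
      refine ⟨u - f a₀, by linarith [hfu a₀ ha₀], fun a ha => isMinOn_iff.mp hmin a ha⟩
  set q : ((Fin n → ℝ) × (Fin m → ℝ)) → ℝ := fun w => ∑ j, (w.2 j - z.2 j) ^ 2 with hq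
  have hq_cont : Continuous q := by
    apply continuous_finset_sum
    intro j _
    exact (((continuous_apply j).comp continuous_snd).sub continuous_const).pow 2
  have hq_nonneg : ∀ w, 0 ≤ q w := fun w => Finset.sum_nonneg fun j _ => sq_nonneg _
  have hq_pos : ∀ w ∈ K, u - f w.1 ≤ ε / 2 → q w ≠ 0 := by
    intro w hw hcase h0
    have hzero : ∀ j ∈ Finset.univ, (w.2 j - z.2 j) ^ 2 = 0 :=
      (Finset.sum_eq_zero_iff_of_nonneg fun j _ => sq_nonneg _).mp h0
    have hy : w.2 = z.2 := by
      funext j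
      have := hzero j (Finset.mem_univ j)
      have := pow_eq_zero_iff (n := 2) (by norm_num) |>.mp this
      linarith [this]
    have hws : w.1 ∈ s := by
      have : (w.1, w.2) ∈ K := by simpa using hw
      rw [hy] at this
      exact this
    have := hεs w.1 hws
    linarith
  set T : Set ((Fin n → ℝ) × (Fin m → ℝ)) := K ∩ {w | u - f w.1 ≤ ε / 2} with hT
  have hTcomp : IsCompact T :=
    hK.inter_right (isClosed_le (continuous_const.sub (f.continuous.comp continuous_fst))
      continuous_const)
  obtain ⟨δ, hδ, hδT⟩ : ∃ δ > 0, ∀ w ∈ T, δ ≤ q w := by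
    rcases T.eq_empty_or_nonempty with h | h
    · exact ⟨1, one_pos, by simp [h]⟩
    · obtain ⟨w₀, hw₀, hmin⟩ := hTcomp.exists_isMinOn h hq_cont.continuousOn
      refine ⟨q w₀, ?_, fun w hw => isMinOn_iff.mp hmin w hw⟩
      have hne0 := hq_pos w₀ hw₀.1 hw₀.2
      exact lt_of_le_of_ne (hq_nonneg w₀) (Ne.symm hne0)
  -- lower bound on K
  obtain ⟨w₁, hw₁, hminK⟩ := hK.exists_isMinOn hKne
    ((continuous_const.sub (f.continuous.comp continuous_fst)).continuousOn)
  set B : ℝ := max 0 (f w₁.1 - u) with hB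
  have hBnn : 0 ≤ B := le_max_left _ _
  have hBbd : ∀ w ∈ K, -B ≤ u - f w.1 := by
    intro w hw
    have h1 : u - f w₁.1 ≤ u - f w.1 := isMinOn_iff.mp hminK w hw
    have h2 : f w₁.1 - u ≤ B := le_max_right _ _
    linarith
  -- the separating affine functional
  set v : Fin n → ℝ := fun i => -(f fun j => if i = j then 1 else 0) with hv
  have hrep : ∀ x : Fin n → ℝ, ∑ i, v i * x i = -(f x) := by
    intro x
    have hfl := LinearMap.pi_apply_eq_sum_univ (f : (Fin n → ℝ) →ₗ[ℝ] ℝ) x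
    simp only [ContinuousLinearMap.coe_coe] at hfl
    rw [hfl, ← Finset.sum_neg_distrib]
    exact Finset.sum_congr rfl fun i _ => by simp [hv, smul_eq_mul]; ring
  refine ⟨v, u, B / δ, ?_, ?_⟩
  · intro w hw
    rw [hrep]
    have hq0 := hq_nonneg w
    have hM0 : 0 ≤ B / δ := div_nonneg hBnn hδ.le
    by_cases hcase : u - f w.1 ≤ ε / 2
    · have hwT : w ∈ T := ⟨hw, hcase⟩
      have h1 : B / δ * δ ≤ B / δ * q w :=
        mul_le_mul_of_nonneg_left (hδT w hwT) hM0
      have h2 : B / δ * δ = B := div_mul_cancel₀ _ hδ.ne'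
      have h3 := hBbd w hw
      linarith
    · push_neg at hcase
      have : 0 ≤ B / δ * q w := mul_nonneg hM0 hq0
      linarith
  · rw [hrep]
    have hsum : ∑ j, (z.2 j - z.2 j) ^ 2 = 0 := by simp
    rw [hsum]
    simp only [mul_zero, add_zero]
    linarith
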